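/- Let m ≥ 3 and let q ∈ ℂ be a primitive m-th root of unity. Let (K, E, F) be an irreducible representation of U_q(sl(2)) of dimension N ≥ 1 such that both E and F are injective (as linear maps on ℂ^N). Then N = m. -/

import Mathlib

open Matrix

noncomputable section

/-- The q-integer `(p)_q = (q^p - q^{-p})/(q - q⁻¹)`. -/
def qint (q : ℂ) (p : ℤ) : ℂ := (q ^ p - q ^ (-p)) / (q - q⁻¹)

/-- A representation of `U_q(sl(2))` of dimension `N`: a triple `(K, E, F)` of `N×N`
complex matrices with `K` invertible satisfying the defining relations. -/
def IsRep (q : ℂ) {N : ℕ} (K E F : Matrix (Fin N) (Fin N) ℂ) : Prop :=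
  IsUnit K ∧
  K * E * K⁻¹ = q • E ∧
  K * F * K⁻¹ = q⁻¹ • F ∧
  E * F - F * E = (q - q⁻¹)⁻¹ • (K ^ 2 - K⁻¹ ^ 2)

/-- A subspace invariant under the three matrices `K`, `E`, `F`. -/
def InvariantSub {N : ℕ} (K E F : Matrix (Fin N) (Fin N) ℂ)
    (W : Submodule ℂ (Fin N → ℂ)) : Prop :=
  (∀ v ∈ W, K.mulVec v ∈ W) ∧ (∀ v ∈ W, E.mulVec v ∈ W) ∧ (∀ v ∈ W, F.mulVec v ∈ W)

/-- An irreducible representation of `U_q(sl(2))` of dimension `N`. -/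
def IsIrrep (q : ℂ) {N : ℕ} (K E F : Matrix (Fin N) (Fin N) ℂ) : Prop :=
  IsRep q K E F ∧ 1 ≤ N ∧
  ∀ W : Submodule ℂ (Fin N → ℂ), InvariantSub K E F W → W = ⊥ ∨ W = ⊤

/-- partial geometric sum, defined recursively -/
def geomA (x : ℂ) : ℕ → ℂ
  | 0 => 0
  | p+1 => 1 + x * geomA x p

lemma geomA_mul (x : ℂ) (p : ℕ) : (x - 1) * geomA x p = x ^ p - 1 := by
  induction p with
  | zero => simp [geomA]
  | succ p ih =>
    rw [geomA, pow_succ]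
    calc (x - 1) * (1 + x * geomA x p) = (x - 1) + x * ((x - 1) * geomA x p) := by ring
    _ = (x - 1) + x * (x ^ p - 1) := by rw [ih]
    _ = x ^ p * x - 1 := by ring

lemma geomA_eq_zero {x : ℂ} (hx : x ≠ 1) {p : ℕ} (hp : x ^ p = 1) : geomA x p = 0 := by
  have h := geomA_mul x p
  rw [hp, sub_self] at h
  exact (mul_eq_zero.mp h).resolve_left (sub_ne_zero.mpr hx)

/-- abstract commutation of powers lemma -/
lemma Epow_mul_F {N : ℕ} (E F X Y : Matrix (Fin N) (Fin N) ℂ) (a b : ℂ)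
    (hC : E * F = F * E + X - Y)
    (hX : E * X = a • (X * E)) (hY : E * Y = b • (Y * E)) (p : ℕ) :
    E ^ (p+1) * F = F * E ^ (p+1) + geomA a (p+1) • (X * E ^ p)
      - geomA b (p+1) • (Y * E ^ p) := by
  induction p with
  | zero =>
    simpa [geomA, pow_one] using hC
  | succ p ih =>
    have h1 : E ^ (p+2) * F = E * (E ^ (p+1) * F) := by
      rw [← mul_assoc, ← pow_succ']
    rw [h1, ih]
    have h2 : E * (F * E ^ (p+1)) = F * E ^ (p+2) + X * E ^ (p+1) - Y * E ^ (p+1) := by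
      rw [← mul_assoc, hC, sub_mul, add_mul, mul_assoc, ← pow_succ']
    have h3 : E * (X * E ^ p) = a • (X * E ^ (p+1)) := by
      rw [← mul_assoc, hX, smul_mul_assoc, mul_assoc, ← pow_succ']
    have h4 : E * (Y * E ^ p) = b • (Y * E ^ (p+1)) := by
      rw [← mul_assoc, hY, smul_mul_assoc, mul_assoc, ← pow_succ']
    rw [mul_sub, mul_add, mul_smul_comm, mul_smul_comm, h2, h3, h4]
    show _ = _ + geomA a (p+2) • _ - geomA b (p+2) • _
    rw [show geomA a (p+2) = 1 + a * geomA a (p+1) from rfl,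
        show geomA b (p+2) = 1 + b * geomA b (p+1) from rfl]
    module

lemma nontrivial_pi {N : ℕ} (hN : 1 ≤ N) : Nontrivial (Fin N → ℂ) := by
  have : Nonempty (Fin N) := ⟨⟨0, hN⟩⟩
  infer_instance

lemma schur_aux {N : ℕ} {q : ℂ} {K E F : Matrix (Fin N) (Fin N) ℂ}
    (h : IsIrrep q K E F) (M : Matrix (Fin N) (Fin N) ℂ)
    (hMK : M * K = K * M) (hME : M * E = E * M) (hMF : M * F = F * M) :
    ∃ c : ℂ, M = c • (1 : Matrix (Fin N) (Fin N) ℂ) := by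
  haveI := nontrivial_pi h.2.1
  obtain ⟨μ, hμ⟩ := Module.End.exists_eigenvalue M.mulVecLin
  refine ⟨μ, ?_⟩
  set W := Module.End.eigenspace M.mulVecLin μ with hWdef
  have hmemW : ∀ u, u ∈ W ↔ M.mulVec u = μ • u := by
    intro u
    rw [hWdef, Module.End.mem_eigenspace_iff, Matrix.mulVecLin_apply]
  have key : ∀ (A : Matrix (Fin N) (Fin N) ℂ), M * A = A * M → ∀ u ∈ W, A.mulVec u ∈ W := by
    intro A hA u hu
    rw [hmemW] at hu ⊢
    rw [Matrix.mulVec_mulVec, hA, ← Matrix.mulVec_mulVec, hu, Matrix.mulVec_smul]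
  have hW : InvariantSub K E F W := ⟨key K hMK, key E hME, key F hMF⟩
  rcases h.2.2 W hW with hbot | htop
  · exact absurd hbot hμ
  · have hall : ∀ u, M.mulVec u = μ • u := fun u =>
      (hmemW u).mp (htop ▸ Submodule.mem_top)
    ext i j
    have := congrFun (hall (Pi.single j 1)) i
    rw [Matrix.mulVec_single_one] at this
    simp only [Matrix.col_apply] at this
    rw [this]
    simp [Matrix.one_apply, Pi.single_apply, eq_comm]

/-- If `(K, E, F)` is an irreducible representation of `U_q(sl(2))` (with `q` a primitive
`m`-th root of unity, `m ≥ 3`) such that both `E` and `F` are injective, then `N = m`. -/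
theorem stmt10 (m : ℕ) (hm : 3 ≤ m) (q : ℂ) (hq : IsPrimitiveRoot q m)
    (N : ℕ) (hN : 1 ≤ N) (K E F : Matrix (Fin N) (Fin N) ℂ)
    (h : IsIrrep q K E F)
    (hE : Function.Injective E.mulVec) (hF : Function.Injective F.mulVec) :
    N = m := by
  classical
  obtain ⟨⟨hKu, hKE, hKF, hEF⟩, hN', hirr⟩ := h
  haveI := nontrivial_pi hN
  -- scalar facts
  have hq0 : q ≠ 0 := fun h0 => by
    have := hq.pow_eq_one
    rw [h0, zero_pow (by omega : m ≠ 0)] at this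
    exact zero_ne_one this
  have hq2 : q ^ 2 ≠ 1 := fun h2 => by
    have := Nat.le_of_dvd (by norm_num) (hq.dvd_of_pow_eq_one 2 h2)
    omega
  have hqm : q ^ m = 1 := hq.pow_eq_one
  have hw : q - q⁻¹ ≠ 0 := by
    rw [sub_ne_zero]
    intro hqq
    apply hq2
    rw [pow_two]
    nth_rewrite 2 [hqq]
    exact mul_inv_cancel₀ hq0
  set w : ℂ := q - q⁻¹ with hwdef
  -- matrix facts
  have hKdet : IsUnit K.det := (Matrix.isUnit_iff_isUnit_det K).mp hKu
  have hK1 : K⁻¹ * K = 1 := Matrix.nonsing_inv_mul K hKdet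
  have hK1' : K * K⁻¹ = 1 := Matrix.mul_nonsing_inv K hKdet
  have rE : K * E = q • (E * K) := by
    calc K * E = (K * E * K⁻¹) * K := by rw [mul_assoc, hK1, mul_one]
    _ = q • (E * K) := by rw [hKE, smul_mul_assoc]
  have rF : K * F = q⁻¹ • (F * K) := by
    calc K * F = (K * F * K⁻¹) * K := by rw [mul_assoc, hK1, mul_one]
    _ = q⁻¹ • (F * K) := by rw [hKF, smul_mul_assoc]
  have rE' : E * K = q⁻¹ • (K * E) := by
    rw [rE, smul_smul, inv_mul_cancel₀ hq0, one_smul]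
  have rF' : F * K = q • (K * F) := by
    rw [rF, smul_smul, mul_inv_cancel₀ hq0, one_smul]
  have rEi : E * K⁻¹ = q • (K⁻¹ * E) := by
    have h1 : K⁻¹ * (K * E * K⁻¹) = E * K⁻¹ := by
      rw [← mul_assoc, ← mul_assoc, hK1, one_mul]
    rw [← h1, hKE, Matrix.mul_smul]
  have rFi : F * K⁻¹ = q⁻¹ • (K⁻¹ * F) := by
    have h1 : K⁻¹ * (K * F * K⁻¹) = F * K⁻¹ := by
      rw [← mul_assoc, ← mul_assoc, hK1, one_mul]
    rw [← h1, hKF, Matrix.mul_smul]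
  -- commutator in additive form
  set X : Matrix (Fin N) (Fin N) ℂ := w⁻¹ • K ^ 2 with hXdef
  set Y : Matrix (Fin N) (Fin N) ℂ := w⁻¹ • K⁻¹ ^ 2 with hYdef
  have hEK2 : E * K ^ 2 = (q ^ 2)⁻¹ • (K ^ 2 * E) := by
    have step : E * (K * K) = (q⁻¹ * q⁻¹) • (K * K * E) := by
      calc E * (K * K) = (E * K) * K := by rw [mul_assoc]
      _ = q⁻¹ • (K * E * K) := by rw [rE', smul_mul_assoc]
      _ = q⁻¹ • (K * (E * K)) := by rw [mul_assoc]
      _ = q⁻¹ • (K * (q⁻¹ • (K * E))) := by rw [rE']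
      _ = (q⁻¹ * q⁻¹) • (K * K * E) := by rw [Matrix.mul_smul, smul_smul, mul_assoc]
    rw [pow_two, pow_two, mul_inv, step]
  have hEKi2 : E * K⁻¹ ^ 2 = (q ^ 2) • (K⁻¹ ^ 2 * E) := by
    have step : E * (K⁻¹ * K⁻¹) = (q * q) • (K⁻¹ * K⁻¹ * E) := by
      calc E * (K⁻¹ * K⁻¹) = (E * K⁻¹) * K⁻¹ := by rw [mul_assoc]
      _ = q • (K⁻¹ * E * K⁻¹) := by rw [rEi, smul_mul_assoc]
      _ = q • (K⁻¹ * (E * K⁻¹)) := by rw [mul_assoc]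
      _ = q • (K⁻¹ * (q • (K⁻¹ * E))) := by rw [rEi]
      _ = (q * q) • (K⁻¹ * K⁻¹ * E) := by rw [Matrix.mul_smul, smul_smul, mul_assoc]
    rw [pow_two, pow_two, step]
  have rC : E * F = F * E + X - Y := by
    have h1 : E * F = F * E + (E * F - F * E) := by abel
    rw [h1, hEF, hXdef, hYdef, smul_sub, add_sub_assoc]
  have rXE : E * X = (q ^ 2)⁻¹ • (X * E) := by
    calc E * X = w⁻¹ • (E * K ^ 2) := by rw [hXdef, Matrix.mul_smul]
    _ = w⁻¹ • ((q ^ 2)⁻¹ • (K ^ 2 * E)) := by rw [hEK2]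
    _ = (q ^ 2)⁻¹ • (w⁻¹ • (K ^ 2 * E)) := smul_comm _ _ _
    _ = (q ^ 2)⁻¹ • (X * E) := by rw [hXdef, smul_mul_assoc]
  have rYE : E * Y = (q ^ 2) • (Y * E) := by
    calc E * Y = w⁻¹ • (E * K⁻¹ ^ 2) := by rw [hYdef, Matrix.mul_smul]
    _ = w⁻¹ • ((q ^ 2) • (K⁻¹ ^ 2 * E)) := by rw [hEKi2]
    _ = (q ^ 2) • (w⁻¹ • (K⁻¹ ^ 2 * E)) := smul_comm _ _ _
    _ = (q ^ 2) • (Y * E) := by rw [hYdef, smul_mul_assoc]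
  -- E^m commutes with everything
  have hx1 : ((q ^ 2)⁻¹ : ℂ) ≠ 1 := by
    intro hh
    apply hq2
    rw [← inv_inv (q ^ 2), hh, inv_one]
  have hxm : ((q ^ 2)⁻¹ : ℂ) ^ m = 1 := by
    rw [inv_pow, ← pow_mul, mul_comm 2 m, pow_mul, hqm, one_pow, inv_one]
  have hgA : geomA ((q ^ 2)⁻¹) m = 0 := geomA_eq_zero hx1 hxm
  have hgB : geomA (q ^ 2) m = 0 :=
    geomA_eq_zero hq2 (by rw [← pow_mul, mul_comm 2 m, pow_mul, hqm, one_pow])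
  have hEmF : E ^ m * F = F * E ^ m := by
    obtain ⟨p, rfl⟩ : ∃ p, m = p + 1 := ⟨m - 1, by omega⟩
    rw [Epow_mul_F E F X Y _ _ rC rXE rYE p, hgA, hgB, zero_smul, zero_smul,
      sub_zero, add_zero]
  have hKEp : ∀ p : ℕ, K * E ^ p = (q ^ p) • (E ^ p * K) := by
    intro p
    induction p with
    | zero => simp
    | succ p ih =>
      rw [pow_succ, ← mul_assoc, ih, smul_mul_assoc, mul_assoc, rE,
        Matrix.mul_smul, smul_smul, ← pow_succ, mul_assoc]
  have hEmK : E ^ m * K = K * E ^ m := by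
    rw [hKEp m, hqm, one_smul]
  have h' : IsIrrep q K E F := ⟨⟨hKu, hKE, hKF, hEF⟩, hN', hirr⟩
  obtain ⟨c, hc⟩ := schur_aux h' (E ^ m) hEmK (by rw [← pow_succ, ← pow_succ']) hEmF
  -- injectivity of powers of E
  have hEp : ∀ p : ℕ, Function.Injective (E ^ p).mulVec := by
    intro p
    induction p with
    | zero => intro x y hxy; simpa [Matrix.one_mulVec] using hxy
    | succ p ih =>
      intro x y hxy
      rw [pow_succ', ← Matrix.mulVec_mulVec, ← Matrix.mulVec_mulVec] at hxy
      exact ih (hE hxy)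
  have hc0 : c ≠ 0 := by
    intro h0
    rw [h0, zero_smul] at hc
    have := hEp m (show (E^m).mulVec (Pi.single ⟨0, hN⟩ 1) = (E^m).mulVec 0 by
      rw [hc, Matrix.zero_mulVec, Matrix.zero_mulVec])
    have h1 := congrFun this ⟨0, hN⟩
    simp at h1
    -- eigenvector machinery
  obtain ⟨lam, hlam⟩ := Module.End.exists_eigenvalue K.mulVecLin
  set V := Module.End.eigenspace K.mulVecLin lam with hVdef
  have hmemV : ∀ u, u ∈ V ↔ K.mulVec u = lam • u := fun u => by
    rw [hVdef, Module.End.mem_eigenspace_iff, Matrix.mulVecLin_apply]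
  have hKFE : K * (F * E) = (F * E) * K := by
    calc K * (F * E) = (K * F) * E := by rw [mul_assoc]
    _ = q⁻¹ • (F * (K * E)) := by rw [rF, smul_mul_assoc, mul_assoc]
    _ = (q⁻¹ * q) • (F * (E * K)) := by rw [rE, Matrix.mul_smul, smul_smul]
    _ = F * E * K := by rw [inv_mul_cancel₀ hq0, one_smul, mul_assoc]
  have hmapV : ∀ u ∈ V, (F * E).mulVecLin u ∈ V := by
    intro u hu
    rw [hmemV] at hu ⊢
    rw [Matrix.mulVecLin_apply, Matrix.mulVec_mulVec, hKFE, ← Matrix.mulVec_mulVec,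
      hu, Matrix.mulVec_smul]
  haveI : Nontrivial V := Submodule.nontrivial_iff_ne_bot.mpr hlam
  set g : V →ₗ[ℂ] V := LinearMap.restrict (F * E).mulVecLin hmapV with hgdef
  obtain ⟨c0, hce⟩ := Module.End.exists_eigenvalue g
  obtain ⟨vv, hvv⟩ := hce.exists_hasEigenvector
  set v0 : Fin N → ℂ := (vv : Fin N → ℂ) with hv0def
  have hv0ne : v0 ≠ 0 := fun hh => hvv.2 (Subtype.ext hh)
  have hv0K : K.mulVec v0 = lam • v0 := (hmemV v0).mp vv.2
  have hv0FE : (F * E).mulVec v0 = c0 • v0 := by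
    have h1 := Module.End.mem_eigenspace_iff.mp hvv.1
    have h2 := congrArg (Subtype.val) h1
    rw [hgdef, LinearMap.restrict_coe_apply] at h2
    simpa [Matrix.mulVecLin_apply] using h2
  have hlam0 : lam ≠ 0 := by
    intro h0
    apply hv0ne
    have hz : K.mulVec v0 = 0 := by rw [hv0K, h0, zero_smul]
    calc v0 = (K⁻¹ * K).mulVec v0 := by rw [hK1, Matrix.one_mulVec]
    _ = K⁻¹.mulVec (K.mulVec v0) := by rw [Matrix.mulVec_mulVec]
    _ = 0 := by rw [hz, Matrix.mulVec_zero]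
  -- the chain of vectors
  set v : ℕ → (Fin N → ℂ) := fun p => (E ^ p).mulVec v0 with hvdef
  have hv0 : v 0 = v0 := by rw [hvdef]; simp [Matrix.one_mulVec]
  have hvs : ∀ p, v (p+1) = E.mulVec (v p) := by
    intro p
    show (E ^ (p+1)).mulVec v0 = E.mulVec ((E ^ p).mulVec v0)
    rw [Matrix.mulVec_mulVec, ← pow_succ']
  have hvK : ∀ p, K.mulVec (v p) = (q ^ p * lam) • v p := by
    intro p
    induction p with
    | zero => rw [hv0, pow_zero, one_mul]; exact hv0K
    | succ p ih =>
      calc K.mulVec (v (p+1)) = (K * E).mulVec (v p) := by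
            rw [hvs p, Matrix.mulVec_mulVec]
      _ = q • (E * K).mulVec (v p) := by rw [rE, Matrix.smul_mulVec]
      _ = q • E.mulVec (K.mulVec (v p)) := by rw [← Matrix.mulVec_mulVec]
      _ = q • ((q ^ p * lam) • E.mulVec (v p)) := by rw [ih, Matrix.mulVec_smul]
      _ = (q ^ (p+1) * lam) • v (p+1) := by
            rw [smul_smul, hvs p, show q * (q ^ p * lam) = q ^ (p+1) * lam by ring]
  have hvne : ∀ p, v p ≠ 0 := by
    intro p
    induction p with
    | zero => rw [hv0]; exact hv0ne
    | succ p ih =>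
      intro hh
      rw [hvs p] at hh
      exact ih (hE (show E.mulVec (v p) = E.mulVec 0 by rw [hh, Matrix.mulVec_zero]))
  have hvKi : ∀ p, K⁻¹.mulVec (v p) = (q ^ p * lam)⁻¹ • v p := by
    intro p
    have ha : (q ^ p * lam) ≠ 0 := mul_ne_zero (pow_ne_zero _ hq0) hlam0
    have h1 : K⁻¹.mulVec (K.mulVec (v p)) = v p := by
      rw [Matrix.mulVec_mulVec, hK1, Matrix.one_mulVec]
    rw [hvK, Matrix.mulVec_smul] at h1
    calc K⁻¹.mulVec (v p) = (q ^ p * lam)⁻¹ • ((q ^ p * lam) • K⁻¹.mulVec (v p)) := by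
          rw [smul_smul, inv_mul_cancel₀ ha, one_smul]
    _ = (q ^ p * lam)⁻¹ • v p := by rw [h1]
  have hFv : ∀ p, ∃ cc : ℂ, F.mulVec (v (p+1)) = cc • v p := by
    intro p
    induction p with
    | zero =>
      refine ⟨c0, ?_⟩
      rw [hvs 0, Matrix.mulVec_mulVec, hv0, hv0FE]
    | succ p ih =>
      obtain ⟨cc, hcc⟩ := ih
      set a : ℂ := q ^ (p+1) * lam with hadef
      refine ⟨cc - w⁻¹ * a ^ 2 + w⁻¹ * (a⁻¹) ^ 2, ?_⟩
      have hKK : (K ^ 2).mulVec (v (p+1)) = (a ^ 2) • v (p+1) := by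
        rw [pow_two, ← Matrix.mulVec_mulVec, hvK, Matrix.mulVec_smul, hvK,
          smul_smul, ← pow_two]
      have hKKi : (K⁻¹ ^ 2).mulVec (v (p+1)) = ((a⁻¹) ^ 2) • v (p+1) := by
        rw [pow_two, ← Matrix.mulVec_mulVec, hvKi, Matrix.mulVec_smul, hvKi,
          smul_smul, ← pow_two]
      have hXv : X.mulVec (v (p+1)) = (w⁻¹ * a ^ 2) • v (p+1) := by
        rw [hXdef, Matrix.smul_mulVec, hKK, smul_smul]
      have hYv : Y.mulVec (v (p+1)) = (w⁻¹ * (a⁻¹) ^ 2) • v (p+1) := by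
        rw [hYdef, Matrix.smul_mulVec, hKKi, smul_smul]
      have e2 : F * E = E * F - X + Y := by rw [rC]; abel
      calc F.mulVec (v (p+2)) = (F * E).mulVec (v (p+1)) := by
            rw [hvs (p+1), Matrix.mulVec_mulVec]
      _ = (E * F).mulVec (v (p+1)) - X.mulVec (v (p+1)) + Y.mulVec (v (p+1)) := by
            rw [e2, Matrix.add_mulVec, Matrix.sub_mulVec]
      _ = cc • v (p+1) - (w⁻¹ * a ^ 2) • v (p+1) + (w⁻¹ * (a⁻¹) ^ 2) • v (p+1) := by
            rw [hXv, hYv, ← Matrix.mulVec_mulVec, hcc, Matrix.mulVec_smul, ← hvs p]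
      _ = (cc - w⁻¹ * a ^ 2 + w⁻¹ * (a⁻¹) ^ 2) • v (p+1) := by
            rw [← sub_smul, ← add_smul]
  -- the invariant subspace
  set x : Fin m → (Fin N → ℂ) := fun p => v (p : ℕ) with hxdef
  set W : Submodule ℂ (Fin N → ℂ) := Submodule.span ℂ (Set.range x) with hWdef
  have hxW : ∀ p : Fin m, v (p : ℕ) ∈ W := fun p => Submodule.subset_span ⟨p, rfl⟩
  have hscal : v m = c • v 0 := by
    show (E ^ m).mulVec v0 = c • v 0
    rw [hc, Matrix.smul_mulVec, Matrix.one_mulVec, hv0]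
  have inv_gen : ∀ (M : Matrix (Fin N) (Fin N) ℂ),
      (∀ p : Fin m, M.mulVec (v (p : ℕ)) ∈ W) → ∀ u ∈ W, M.mulVec u ∈ W := by
    intro M hgen u hu
    have hle : W ≤ Submodule.comap M.mulVecLin W := by
      rw [hWdef, Submodule.span_le]
      rintro _ ⟨p, rfl⟩
      exact Submodule.mem_comap.mpr (by rw [Matrix.mulVecLin_apply]; exact hgen p)
    have := hle hu
    rwa [Submodule.mem_comap, Matrix.mulVecLin_apply] at this
  have hWK : ∀ u ∈ W, K.mulVec u ∈ W :=
    inv_gen K (fun p => by rw [hvK]; exact Submodule.smul_mem _ _ (hxW p))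
  have hWE : ∀ u ∈ W, E.mulVec u ∈ W := by
    apply inv_gen
    intro p
    rw [← hvs]
    by_cases hp : (p : ℕ) + 1 < m
    · exact hxW ⟨(p : ℕ) + 1, hp⟩
    · have hpm : (p : ℕ) + 1 = m := by have := p.isLt; omega
      rw [hpm, hscal]
      exact Submodule.smul_mem _ _ (hxW ⟨0, by omega⟩)
  have hWF : ∀ u ∈ W, F.mulVec u ∈ W := by
    apply inv_gen
    intro p
    rcases Nat.eq_zero_or_pos (p : ℕ) with hp | hp
    · have hv0c : v 0 = c⁻¹ • v m := by
        rw [hscal, smul_smul, inv_mul_cancel₀ hc0, one_smul]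
      rw [hp, hv0c, Matrix.mulVec_smul]
      obtain ⟨cc, hcc⟩ := hFv (m - 1)
      have hm1 : (m - 1) + 1 = m := by omega
      rw [← hm1, hcc]
      exact Submodule.smul_mem _ _ (Submodule.smul_mem _ _ (hxW ⟨m - 1, by omega⟩))
    · obtain ⟨p', hp'⟩ : ∃ p', (p : ℕ) = p' + 1 := ⟨(p : ℕ) - 1, by omega⟩
      obtain ⟨cc, hcc⟩ := hFv p'
      rw [hp', hcc]
      have hlt : p' < m := by have := p.isLt; omega
      exact Submodule.smul_mem _ _ (hxW ⟨p', hlt⟩)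
  have hWtop : W = ⊤ := by
    rcases hirr W ⟨hWK, hWE, hWF⟩ with hbot | htop
    · exfalso
      have hmem : v 0 ∈ W := hxW ⟨0, by omega⟩
      rw [hbot, Submodule.mem_bot] at hmem
      exact hvne 0 hmem
    · exact htop
  -- linear independence
  have hli : LinearIndependent ℂ x := by
    apply Module.End.eigenvectors_linearIndependent' K.mulVecLin
      (fun p : Fin m => q ^ (p : ℕ) * lam) ?_ x ?_
    · intro i j hij
      have h1 : q ^ (i : ℕ) = q ^ (j : ℕ) := mul_right_cancel₀ hlam0 hij
      exact Fin.ext (hq.pow_inj i.isLt j.isLt h1)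
    · intro p
      refine ⟨Module.End.mem_eigenspace_iff.mpr ?_, hvne (p : ℕ)⟩
      rw [Matrix.mulVecLin_apply]
      exact hvK (p : ℕ)
  -- conclusion
  have hsp : ⊤ ≤ Submodule.span ℂ (Set.range x) := by rw [← hWdef, hWtop]
  let b : Module.Basis (Fin m) ℂ (Fin N → ℂ) := Module.Basis.mk hli hsp
  have h1 : Module.finrank ℂ (Fin N → ℂ) = N := Module.finrank_fin_fun ℂ
  have h2 : Module.finrank ℂ (Fin N → ℂ) = m := by
    rw [Module.finrank_eq_card_basis b, Fintype.card_fin]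
  omega
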